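/- arXiv:2110.04114 — 2 statements merged into one kernel-verified Lean document; each statement's English description precedes it below -/
import Mathlib

section
/- Let Φ(z) = νz − d for all z ∈ ℂ with |ν| ≤ 1, and suppose the composition operator C_Φ is bounded on H_E(ζ). Then C_Φ is a co-isometry if and only if C_Φ is unitary. -/
open Filter ContinuousLinearMap
open scoped ComplexConjugate

noncomputable section

/-- The weighted Hardy space of entire functions `H_E(ζ)`, realized as the Hilbert space of
coefficient sequences: an entire function `g z = ∑ bₙ zⁿ` with `∑ |bₙ|² ζₙ² < ∞` is encoded by
the `ℓ²`-sequence `n ↦ bₙ * ζₙ`.  With this identification the `lp`-inner product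
`⟪f, g⟫ = ∑ conj (f n) * g n` is exactly `∑ conj bₙ * cₙ * ζₙ²` (Mathlib's convention:
conjugate-linear in the first variable). -/
abbrev HE (_ζ : ℕ → ℝ) : Type := lp (fun _ : ℕ => ℂ) 2

/-- The `n`-th Taylor coefficient `bₙ` of an element of `H_E(ζ)`. -/
def HE.coeff (ζ : ℕ → ℝ) (f : HE ζ) (n : ℕ) : ℂ := f n / (ζ n : ℂ)

/-- The entire function `z ↦ ∑ bₙ zⁿ` represented by an element of `H_E(ζ)`. -/
def HE.toFun (ζ : ℕ → ℝ) (f : HE ζ) : ℂ → ℂ := fun z => ∑' n, HE.coeff ζ f n * z ^ n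

/-- Summability of the coefficient series against any radius. -/
lemma HE.summable_coeff (ζ : ℕ → ℝ) (hζ : ∀ n, 0 < ζ n)
    (hlim : Tendsto (fun n : ℕ => (ζ n) ^ ((1 : ℝ) / n)) atTop atTop)
    (f : HE ζ) (r : ℝ) (hr : 0 ≤ r) :
    Summable fun n => ‖HE.coeff ζ f n‖ * r ^ n := by
  obtain ⟨N, hN⟩ := (hlim.eventually_ge_atTop (2 * r + 1)).exists_forall_of_atTop
  set N' := max N 1 with hN'
  have hq0 : (0:ℝ) ≤ r / (2 * r + 1) := by positivity
  have hq1 : r / (2 * r + 1) < 1 := by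
    rw [div_lt_one (by linarith)]; linarith
  rw [← summable_nat_add_iff N']
  have hgeo : Summable fun n : ℕ => ‖f‖ * (r / (2 * r + 1)) ^ (n + N') := by
    simp_rw [pow_add]
    exact ((summable_geometric_of_lt_one hq0 hq1).mul_right _).mul_left _
  refine hgeo.of_nonneg_of_le (fun n => by positivity) (fun n => ?_)
  set m := n + N' with hm
  have hm1 : 1 ≤ m := le_trans (le_max_right N 1) (Nat.le_add_left N' n)
  have hmN : N ≤ m := le_trans (le_max_left N 1) (Nat.le_add_left N' n)
  have hz : (2 * r + 1) ^ m ≤ ζ m := by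
    have h1 : (2 * r + 1) ≤ (ζ m) ^ ((1:ℝ) / m) := hN m hmN
    have h2 : ((ζ m) ^ ((1:ℝ) / m)) ^ (m:ℕ) = ζ m := by
      rw [← Real.rpow_natCast ((ζ m) ^ ((1:ℝ)/m)) m, ← Real.rpow_mul (hζ m).le]
      rw [one_div, inv_mul_cancel₀ (by exact_mod_cast Nat.one_le_iff_ne_zero.mp hm1 ∘ Nat.cast_injective.eq_iff.mp), Real.rpow_one]
    calc (2 * r + 1) ^ m ≤ ((ζ m) ^ ((1:ℝ)/m)) ^ m :=
          pow_le_pow_left₀ (by linarith) h1 m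
      _ = ζ m := h2
  have hfb : ‖HE.coeff ζ f m‖ ≤ ‖f‖ / ζ m := by
    have h1 : ‖(f : ∀ _ : ℕ, ℂ) m‖ ≤ ‖f‖ := lp.norm_apply_le_norm (by norm_num) f m
    have h2 : ‖((ζ m : ℝ) : ℂ)‖ = ζ m := by simp [abs_of_pos (hζ m)]
    rw [HE.coeff, norm_div, h2]
    exact div_le_div_of_nonneg_right h1 (hζ m).le
  calc ‖HE.coeff ζ f m‖ * r ^ m ≤ (‖f‖ / ζ m) * r ^ m :=
        by exact mul_le_mul_of_nonneg_right hfb (pow_nonneg hr m)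
    _ = ‖f‖ * (r ^ m / ζ m) := by ring
    _ ≤ ‖f‖ * (r ^ m / (2 * r + 1) ^ m) := by gcongr
    _ = ‖f‖ * (r / (2 * r + 1)) ^ m := by rw [div_pow]

/-- The coefficient series converges to `HE.toFun`. -/
lemma HE.hasSum_toFun (ζ : ℕ → ℝ) (hζ : ∀ n, 0 < ζ n)
    (hlim : Tendsto (fun n : ℕ => (ζ n) ^ ((1 : ℝ) / n)) atTop atTop)
    (f : HE ζ) (z : ℂ) :
    HasSum (fun n => HE.coeff ζ f n * z ^ n) (HE.toFun ζ f z) := by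
  have hs : Summable fun n => HE.coeff ζ f n * z ^ n := by
    apply Summable.of_norm
    simpa [norm_mul, norm_pow] using
      HE.summable_coeff ζ hζ hlim f ‖z‖ (norm_nonneg z)
  exact hs.hasSum

/-- If the entire function represented by `f` vanishes identically, then `f = 0`. -/
lemma HE.eq_zero_of_toFun_eq_zero (ζ : ℕ → ℝ) (hζ : ∀ n, 0 < ζ n)
    (hlim : Tendsto (fun n : ℕ => (ζ n) ^ ((1 : ℝ) / n)) atTop atTop)
    (f : HE ζ) (h : ∀ z, HE.toFun ζ f z = 0) : f = 0 := by
  set p := FormalMultilinearSeries.ofScalars ℂ (HE.coeff ζ f) with hp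
  have hpr : p.radius = ⊤ := by
    apply FormalMultilinearSeries.radius_eq_top_of_summable_norm
    intro r
    simp only [hp, FormalMultilinearSeries.ofScalars_norm]
    exact HE.summable_coeff ζ hζ hlim f r r.coe_nonneg
  have hball : HasFPowerSeriesOnBall (HE.toFun ζ f) p 0 ⊤ := by
    refine ⟨hpr.ge, by simp, fun {y} _ => ?_⟩
    have hsum := HE.hasSum_toFun ζ hζ hlim f y
    have heq : (fun n => p n fun _ => y) = fun n => HE.coeff ζ f n * y ^ n := by
      funext n
      rw [hp, FormalMultilinearSeries.ofScalars_apply_eq, smul_eq_mul]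
    rw [heq, zero_add]
    exact hsum
  have h0 : HasFPowerSeriesAt (0 : ℂ → ℂ) p 0 := by
    have := hball.hasFPowerSeriesAt
    rwa [show HE.toFun ζ f = 0 from funext h] at this
  have hp0 : p = 0 := h0.eq_zero
  have hc : ∀ n, HE.coeff ζ f n = 0 := by
    intro n
    have : p n = 0 := by rw [hp0]; rfl
    rwa [hp, FormalMultilinearSeries.ofScalars_eq_zero] at this
  apply lp.ext
  funext n
  have := hc n
  rw [HE.coeff, div_eq_zero_iff] at this
  rcases this with h1 | h1
  · simpa using h1
  · exact absurd h1 (by simpa using (hζ n).ne')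

/-- For `Φ z = ν z - d` with `|ν| ≤ 1` inducing a bounded composition operator on `H_E(ζ)`:
`C_Φ` is a co-isometry iff it is unitary. -/
theorem composition_coisometry_iff_unitary
    (ζ : ℕ → ℝ) (hζ : ∀ n, 0 < ζ n)
    (hlim : Tendsto (fun n : ℕ => (ζ n) ^ ((1 : ℝ) / n)) atTop atTop)
    (ν d : ℂ) (hν : ‖ν‖ ≤ 1)
    (T : HE ζ →L[ℂ] HE ζ)
    (hT : ∀ f : HE ζ, ∀ z : ℂ, HE.toFun ζ (T f) z = HE.toFun ζ f (ν * z - d)) :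
    T.comp (adjoint T) = ContinuousLinearMap.id ℂ (HE ζ) ↔
      (T.comp (adjoint T) = ContinuousLinearMap.id ℂ (HE ζ) ∧
        (adjoint T).comp T = ContinuousLinearMap.id ℂ (HE ζ)) := by
  constructor
  · intro h
    refine ⟨h, ?_⟩
    have hsurj : ∀ g : HE ζ, T (adjoint T g) = g := by
      intro g
      have := ContinuousLinearMap.ext_iff.mp h g
      simpa using this
    -- First, ν ≠ 0.
    have hν0 : ν ≠ 0 := by
      intro hν0
      set g : HE ζ := lp.single 2 1 (1 : ℂ) with hg
      have htf : ∀ z : ℂ, HE.toFun ζ g z = z / (ζ 1 : ℂ) := by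
        intro z
        have hterm : ∀ n : ℕ, HE.coeff ζ g n * z ^ n
            = if n = 1 then z / (ζ 1 : ℂ) else 0 := by
          intro n
          have hgn : (g : ∀ _ : ℕ, ℂ) n = if n = 1 then 1 else 0 := by
            rcases eq_or_ne n 1 with hn | hn
            · subst hn; simp [hg, lp.single_apply_self]
            · rw [hg, lp.single_apply_ne (E := fun _ : ℕ => ℂ) 2 1 (1 : ℂ) hn]
              simp [hn]
          rcases eq_or_ne n 1 with hn | hn
          · subst hn; simp [HE.coeff, hgn, div_eq_mul_inv, mul_comm]
          · simp [HE.coeff, hgn, hn]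
        rw [HE.toFun]
        calc (∑' n, HE.coeff ζ g n * z ^ n)
            = ∑' n : ℕ, if n = 1 then z / (ζ 1 : ℂ) else 0 := tsum_congr hterm
          _ = z / (ζ 1 : ℂ) := tsum_ite_eq 1 _
      have h1 : ∀ z : ℂ, HE.toFun ζ g z = HE.toFun ζ (adjoint T g) (ν * z - d) := by
        intro z
        have := hT (adjoint T g) z
        rwa [hsurj g] at this
      have h01 : HE.toFun ζ g 0 = HE.toFun ζ g 1 := by
        rw [h1 0, h1 1, hν0]
        norm_num
      rw [htf 0, htf 1] at h01
      have hζ1 : ((ζ 1 : ℝ) : ℂ) ≠ 0 := by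
        simpa using (hζ 1).ne'
      rw [zero_div] at h01
      exact one_div_ne_zero hζ1 h01.symm
    -- T is injective.
    have hinj : ∀ f : HE ζ, T f = 0 → f = 0 := by
      intro f hf
      apply HE.eq_zero_of_toFun_eq_zero ζ hζ hlim f
      intro w
      have hz := hT f ((w + d) / ν)
      rw [hf] at hz
      have hz0 : HE.toFun ζ (0 : HE ζ) ((w + d) / ν) = 0 := by
        have : ∀ n, HE.coeff ζ (0 : HE ζ) n = 0 := by
          intro n; simp [HE.coeff]
        simp [HE.toFun, this]
      have harg : ν * ((w + d) / ν) - d = w := by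
        field_simp
        ring
      rw [harg] at hz
      rw [← hz, hz0]
    -- Conclude T* T = I.
    apply ContinuousLinearMap.ext
    intro f
    have key : T (adjoint T (T f) - f) = 0 := by
      rw [map_sub, hsurj (T f), sub_self]
    have := hinj _ key
    have h2 : adjoint T (T f) = f := by
      rwa [sub_eq_zero] at this
    simpa using h2
  · rintro ⟨h1, _⟩
    exact h1
end
end

section
/- Let Φ(z) = νz for all z ∈ ℂ with |ν| ≤ 1 and let Υ be an entire function on ℂ such that C_{Υ,Φ} is bounded on H_E(ζ). Then C_{Υ,Φ} is a co-isometry if and only if C_{Υ,Φ} is unitary. -/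
open Filter ContinuousLinearMap
open scoped ComplexConjugate

noncomputable section

namespace HEaux

variable {ζ : ℕ → ℝ}

lemma coeff_norm (hζ : ∀ n, 0 < ζ n) (f : HE ζ) (n : ℕ) :
    ‖HE.coeff ζ f n‖ = ‖f n‖ / ζ n := by
  rw [HE.coeff, norm_div, Complex.norm_real, Real.norm_of_nonneg (hζ n).le]

/-- The element of `H_E(ζ)` has an entire power series expansion. -/
lemma hasFPSB (hζ : ∀ n, 0 < ζ n)
    (hlim : Tendsto (fun n : ℕ => (ζ n) ^ ((1 : ℝ) / n)) atTop atTop)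
    (f : HE ζ) :
    HasFPowerSeriesOnBall (HE.toFun ζ f)
      (FormalMultilinearSeries.ofScalars ℂ (HE.coeff ζ f)) 0 ⊤ := by
  set p := FormalMultilinearSeries.ofScalars ℂ (HE.coeff ζ f) with hp
  have hrad : p.radius = ⊤ := by
    apply FormalMultilinearSeries.radius_eq_top_of_forall_nnreal_isBigO
    intro r
    apply Asymptotics.IsBigO.of_bound ‖f‖
    have h1 : ∀ᶠ n : ℕ in atTop, (r : ℝ) + 1 ≤ (ζ n) ^ ((1 : ℝ) / n) :=
      hlim.eventually_ge_atTop _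
    filter_upwards [h1, eventually_ge_atTop 1] with n hn hn1
    have hζn : (r : ℝ) ^ n ≤ ζ n := by
      have h2 : ((ζ n) ^ ((1 : ℝ) / n)) ^ (n : ℕ) = ζ n := by
        rw [← Real.rpow_natCast ((ζ n) ^ ((1 : ℝ) / n)) n, ← Real.rpow_mul (hζ n).le,
          one_div, inv_mul_cancel₀ (by exact_mod_cast (by omega : n ≠ 0)), Real.rpow_one]
      calc (r : ℝ) ^ n ≤ ((r : ℝ) + 1) ^ n :=
            pow_le_pow_left₀ r.coe_nonneg (by linarith) n
        _ ≤ _ := by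
            rw [← h2]; exact pow_le_pow_left₀ (by positivity) hn n
    have hpn : ‖p n‖ = ‖f n‖ / ζ n := by
      rw [hp, FormalMultilinearSeries.ofScalars_norm, coeff_norm hζ]
    have hfn : ‖f n‖ ≤ ‖f‖ := lp.norm_apply_le_norm (by norm_num) f n
    rw [Real.norm_of_nonneg (by positivity), norm_one, mul_one, hpn,
      div_mul_eq_mul_div, div_le_iff₀ (hζ n)]
    exact mul_le_mul hfn hζn (by positivity) (norm_nonneg f)
  have hsum : p.sum = HE.toFun ζ f := by
    funext x
    simp only [FormalMultilinearSeries.sum, hp, FormalMultilinearSeries.ofScalars_apply_eq,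
      smul_eq_mul, HE.toFun]
  have h := p.hasFPowerSeriesOnBall (by rw [hrad]; exact ENNReal.zero_lt_top)
  rw [hsum, hrad] at h
  exact h

lemma analyticOnNhd (hζ : ∀ n, 0 < ζ n)
    (hlim : Tendsto (fun n : ℕ => (ζ n) ^ ((1 : ℝ) / n)) atTop atTop)
    (f : HE ζ) : AnalyticOnNhd ℂ (HE.toFun ζ f) Set.univ := fun x _ =>
  (hasFPSB hζ hlim f).analyticAt_of_mem (by simp [edist_lt_top])

/-- A function representing the zero entire function is zero. -/
lemma eq_zero_of_toFun_eq_zero (hζ : ∀ n, 0 < ζ n)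
    (hlim : Tendsto (fun n : ℕ => (ζ n) ^ ((1 : ℝ) / n)) atTop atTop)
    (f : HE ζ) (h : ∀ z, HE.toFun ζ f z = 0) : f = 0 := by
  have h1 := (hasFPSB hζ hlim f).hasFPowerSeriesAt
  have h2 : HE.toFun ζ f = (0 : ℂ → ℂ) := funext fun z => h z
  rw [h2] at h1
  have h3 := h1.eq_zero
  have h4 : HE.coeff ζ f = 0 :=
    (FormalMultilinearSeries.ofScalars_series_eq_zero ℂ).mp h3
  ext n
  have h5 : HE.coeff ζ f n = 0 := by rw [h4]; rfl
  rw [HE.coeff, div_eq_zero_iff] at h5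
  rcases h5 with h5 | h5
  · exact h5
  · exact absurd h5 (by exact_mod_cast (hζ n).ne')

lemma toFun_zero_elem (z : ℂ) : HE.toFun ζ (0 : HE ζ) z = 0 := by
  simp [HE.toFun, HE.coeff]

lemma toFun_apply_zero (f : HE ζ) : HE.toFun ζ f 0 = HE.coeff ζ f 0 := by
  rw [HE.toFun, tsum_eq_single 0 (fun n hn => by simp [zero_pow hn])]
  simp

lemma toFun_single (i : ℕ) (z : ℂ) :
    HE.toFun ζ (lp.single 2 i (1 : ℂ)) z = z ^ i / (ζ i : ℂ) := by
  rw [HE.toFun, tsum_eq_single i (fun n hn => by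
    simp [HE.coeff, lp.single_apply_ne 2 i _ hn, Pi.single_apply, hn])]
  rw [HE.coeff, lp.single_apply_self]
  ring

end HEaux

/-- For `Φ z = ν z` with `|ν| ≤ 1` and entire `Υ` with `C_{Υ,Φ}` bounded on `H_E(ζ)`:
`C_{Υ,Φ}` is a co-isometry iff it is unitary. -/
theorem weighted_composition_coisometry_iff_unitary
    (ζ : ℕ → ℝ) (hζ : ∀ n, 0 < ζ n)
    (hlim : Tendsto (fun n : ℕ => (ζ n) ^ ((1 : ℝ) / n)) atTop atTop)
    (ν : ℂ) (hν : ‖ν‖ ≤ 1)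
    (Υ : ℂ → ℂ) (hΥ : Differentiable ℂ Υ)
    (T : HE ζ →L[ℂ] HE ζ)
    (hT : ∀ f : HE ζ, ∀ z : ℂ, HE.toFun ζ (T f) z = Υ z * HE.toFun ζ f (ν * z)) :
    T.comp (adjoint T) = ContinuousLinearMap.id ℂ (HE ζ) ↔
      (T.comp (adjoint T) = ContinuousLinearMap.id ℂ (HE ζ) ∧
        (adjoint T).comp T = ContinuousLinearMap.id ℂ (HE ζ)) := by
  constructor
  · intro h
    refine ⟨h, ?_⟩
    have hco : ∀ x : HE ζ, T (adjoint T x) = x := by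
      intro x
      have := ContinuousLinearMap.ext_iff.mp h x
      simpa using this
    -- Υ is not identically zero
    have hΥne : ∃ z, Υ z ≠ 0 := by
      by_contra hc
      push_neg at hc
      have hT0 : ∀ g : HE ζ, T g = 0 := by
        intro g
        apply HEaux.eq_zero_of_toFun_eq_zero hζ hlim
        intro z
        rw [hT g z, hc z, zero_mul]
      have h0 := hco (lp.single 2 0 (1 : ℂ))
      rw [hT0 _] at h0
      have := congrArg (fun v : HE ζ => v 0) h0
      simp only [lp.single_apply_self] at this
      simp at this
    -- ν ≠ 0
    have hν0 : ν ≠ 0 := by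
      by_contra hc
      set e₀ : HE ζ := lp.single 2 0 (1 : ℂ)
      set e₁ : HE ζ := lp.single 2 1 (1 : ℂ)
      have he₀ : ∀ z : ℂ, (1 : ℂ) / (ζ 0 : ℂ) = Υ z * HE.toFun ζ (adjoint T e₀) 0 := by
        intro z
        have := hT (adjoint T e₀) z
        rw [hco e₀] at this
        rw [HEaux.toFun_single 0 z] at this
        simpa [hc] using this
      have he₁ : ∀ z : ℂ, z / (ζ 1 : ℂ) = Υ z * HE.toFun ζ (adjoint T e₁) 0 := by
        intro z
        have := hT (adjoint T e₁) z
        rw [hco e₁] at this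
        rw [HEaux.toFun_single 1 z] at this
        simpa [hc] using this
      have hζ0 : ((ζ 0 : ℂ)) ≠ 0 := by exact_mod_cast (hζ 0).ne'
      have hζ1 : ((ζ 1 : ℂ)) ≠ 0 := by exact_mod_cast (hζ 1).ne'
      have hΥ0 : Υ 0 ≠ 0 := by
        intro hu
        have := he₀ 0
        rw [hu, zero_mul] at this
        exact (div_ne_zero one_ne_zero hζ0) this
      have hc₁ : HE.toFun ζ (adjoint T e₁) 0 = 0 := by
        have := he₁ 0
        rw [zero_div] at this
        rcases mul_eq_zero.mp this.symm with h' | h'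
        · exact absurd h' hΥ0
        · exact h'
      have := he₁ 1
      rw [hc₁, mul_zero] at this
      exact (div_ne_zero one_ne_zero hζ1) this
    -- T is injective
    have hinj : ∀ g : HE ζ, T g = 0 → g = 0 := by
      intro g hg
      have hz : ∀ z, Υ z * HE.toFun ζ g (ν * z) = 0 := by
        intro z
        rw [← hT g z, hg, HEaux.toFun_zero_elem]
      obtain ⟨z₀, hz₀⟩ := hΥne
      have hev : (fun z => HE.toFun ζ g (ν * z)) =ᶠ[nhds z₀] 0 := by
        filter_upwards [(hΥ.continuous.continuousAt (x := z₀)).eventually_ne hz₀] with z hzz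
        exact (mul_eq_zero.mp (hz z)).resolve_left hzz
      have hA : AnalyticOnNhd ℂ (fun z => HE.toFun ζ g (ν * z)) Set.univ := by
        intro x _
        exact (HEaux.analyticOnNhd hζ hlim g (ν * x) trivial).comp
          (analyticAt_const.mul analyticAt_id)
      have hzero := hA.eqOn_zero_of_preconnected_of_eventuallyEq_zero
        isPreconnected_univ (Set.mem_univ z₀) hev
      apply HEaux.eq_zero_of_toFun_eq_zero hζ hlim
      intro w
      have := hzero (Set.mem_univ (ν⁻¹ * w))
      simpa [mul_inv_cancel_left₀ hν0] using this
    -- conclude T*T = id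
    refine ContinuousLinearMap.ext fun f => ?_
    have hTf : T (adjoint T (T f) - f) = 0 := by
      rw [map_sub, hco (T f), sub_self]
    have := hinj _ hTf
    have h2 : adjoint T (T f) = f := sub_eq_zero.mp this
    simpa using h2
  · exact fun h => h.1
end
end
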